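/- arXiv:2107.02430 — 3 statements merged into one kernel-verified Lean document; each statement's English description precedes it below -/
import Mathlib

section
/- The SEIR metapopulation model with infection during travel has a unique disease-free equilibrium P⁰ = (S⁰_1, 0, 0, 0, …, S⁰_n, 0, 0, 0) ∈ ℝ₊^{4n}: precisely, the matrix ψ^S = diag(μ_i + Σ_{j=1}^n m_{ji}) − M (where M = (m_{ij})) is invertible, the vector S⁰ = (ψ^S)^{-1} Π has all entries strictly positive, the point (S⁰, 0, 0, 0) is an equilibrium of the system, and it is the only equilibrium with E_i = 0 and I_i = 0 for all i (in particular the only equilibrium solution of ψ^S S = Π, ψ^R R = 0 is S = S⁰, R = 0). -/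
set_option linter.unusedVariables false

open Finset Matrix Filter Topology

/-- The `S`-component of the vector field of the SEIR metapopulation model with
infection during travel, evaluated at the state `(S, E, I, R)`. -/
noncomputable def vfS (n : ℕ) (Λ β μ γ σ δ α ξ p : Fin n → ℝ)
    (m : Fin n → Fin n → ℝ) (S E I R : Fin n → ℝ) (i : Fin n) : ℝ :=
  Λ i - β i * S i * I i / (S i + E i + I i + R i) - μ i * S i
    - (∑ j, m j i) * S i
    + ∑ j, m i j * (1 - α j * I j / (S j + E j + I j + R j)) * S j

/-- The `E`-component of the vector field. -/
noncomputable def vfE (n : ℕ) (Λ β μ γ σ δ α ξ p : Fin n → ℝ)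
    (m : Fin n → Fin n → ℝ) (S E I R : Fin n → ℝ) (i : Fin n) : ℝ :=
  β i * S i * I i / (S i + E i + I i + R i) - (γ i + μ i) * E i
    - (∑ j, m j i) * E i
    + ∑ j, m i j * (α j * I j / (S j + E j + I j + R j)) * S j
    + ∑ j, (1 - ξ i) * m i j * E j

/-- The `I`-component of the vector field. -/
noncomputable def vfI (n : ℕ) (Λ β μ γ σ δ α ξ p : Fin n → ℝ)
    (m : Fin n → Fin n → ℝ) (S E I R : Fin n → ℝ) (i : Fin n) : ℝ :=
  γ i * E i - (σ i + μ i + δ i) * I i - (∑ j, m j i) * I i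
    + ∑ j, ξ i * m i j * E j + ∑ j, (1 - p i) * m i j * I j

/-- The `R`-component of the vector field. -/
noncomputable def vfR (n : ℕ) (Λ β μ γ σ δ α ξ p : Fin n → ℝ)
    (m : Fin n → Fin n → ℝ) (S E I R : Fin n → ℝ) (i : Fin n) : ℝ :=
  σ i * I i - μ i * R i - (∑ j, m j i) * R i
    + ∑ j, m i j * R j + ∑ j, p i * m i j * I j

/-- The matrix `ψ^S = ψ^R = diag(μ_i + ∑_j m_{ji}) − M`, where `M = (m_{ij})`. -/
noncomputable def psiS (n : ℕ) (μ : Fin n → ℝ) (m : Fin n → Fin n → ℝ) :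
    Matrix (Fin n) (Fin n) ℝ :=
  Matrix.diagonal (fun i => μ i + ∑ j, m j i) - Matrix.of m

lemma psiS_mulVec (n : ℕ) (μ : Fin n → ℝ) (m : Fin n → Fin n → ℝ) (S : Fin n → ℝ) (i : Fin n) :
    (psiS n μ m *ᵥ S) i = (μ i + ∑ j, m j i) * S i - ∑ j, m i j * S j := by
  simp only [psiS, sub_mulVec, mulVec, dotProduct, Matrix.sub_apply, Matrix.diagonal_apply, Matrix.of_apply, sub_mul, Finset.sum_sub_distrib, Pi.sub_apply]
  congr 1
  simp

lemma psiS_det_ne (n : ℕ) (μ : Fin n → ℝ) (m : Fin n → Fin n → ℝ)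
    (hμ : ∀ i, 0 < μ i) (hm : ∀ i j, 0 ≤ m i j) (hmd : ∀ i, m i i = 0) :
    (psiS n μ m).det ≠ 0 := by
  apply det_ne_zero_of_sum_col_lt_diag
  intro k
  have h1 : ∀ i ∈ Finset.univ.erase k, ‖psiS n μ m i k‖ = m i k := by
    intro i hi
    have : i ≠ k := (Finset.mem_erase.mp hi).1
    simp [psiS, diagonal, this, abs_of_nonneg (hm i k)]
  rw [Finset.sum_congr rfl h1]
  have h2 : psiS n μ m k k = μ k + ∑ j, m j k := by simp [psiS, diagonal, hmd k]
  have h3 : ∑ i ∈ Finset.univ.erase k, m i k = ∑ i, m i k := by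
    rw [Finset.sum_erase_eq_sub (Finset.mem_univ k), hmd k, sub_zero]
  rw [h2, h3, Real.norm_eq_abs, abs_of_pos]
  · linarith [hμ k, Finset.sum_nonneg (fun j (_ : j ∈ Finset.univ) => hm j k)]
  · linarith [hμ k, Finset.sum_nonneg (fun j (_ : j ∈ Finset.univ) => hm j k)]

lemma psiS_pos_sol (n : ℕ) [NeZero n] (Λ μ : Fin n → ℝ) (m : Fin n → Fin n → ℝ)
    (hΛ : ∀ i, 0 < Λ i) (hμ : ∀ i, 0 < μ i) (hm : ∀ i j, 0 ≤ m i j)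
    (S : Fin n → ℝ)
    (hS : ∀ i, (μ i + ∑ j, m j i) * S i - ∑ j, m i j * S j = Λ i) :
    ∀ i, 0 < S i := by
  classical
  have hnn : ∀ i, 0 ≤ S i := by
    by_contra hc
    push_neg at hc
    set N : Finset (Fin n) := Finset.univ.filter (fun i => S i < 0) with hNdef
    have hNne : N.Nonempty := by
      obtain ⟨i, hi⟩ := hc
      exact ⟨i, by simp [hNdef]; exact hi⟩
    have hmemN : ∀ i, i ∈ N ↔ S i < 0 := by intro i; simp [hNdef]
    -- sum over N of (Λ i - μ i * S i) is positive
    have hpos : 0 < ∑ i ∈ N, (Λ i - μ i * S i) := by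
      apply Finset.sum_pos _ hNne
      intro i hi
      have hSi := (hmemN i).mp hi
      nlinarith [hΛ i, hμ i]
    -- but it equals the m-terms
    have heq : ∑ i ∈ N, (Λ i - μ i * S i)
        = ∑ i ∈ N, ((∑ j, m j i) * S i) - ∑ i ∈ N, (∑ j, m i j * S j) := by
      rw [← Finset.sum_sub_distrib]
      apply Finset.sum_congr rfl
      intro i _
      have := hS i
      linarith
    have hA : ∑ i ∈ N, ((∑ j, m j i) * S i) ≤ ∑ i ∈ N, ∑ j ∈ N, m j i * S i := by
      apply Finset.sum_le_sum
      intro i hi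
      have hSi := (hmemN i).mp hi
      rw [Finset.sum_mul]
      have hnp : ∀ j ∈ Finset.univ, j ∉ N → 0 ≤ (fun j => -(m j i * S i)) j := by
        intro j _ _
        show (0:ℝ) ≤ -(m j i * S i)
        nlinarith [mul_nonneg (hm j i) (neg_nonneg.mpr hSi.le)]
      have := Finset.sum_le_sum_of_subset_of_nonneg (f := fun j => -(m j i * S i))
        (Finset.subset_univ N) hnp
      simp only [Finset.sum_neg_distrib] at this
      linarith
    have hB : ∑ i ∈ N, ∑ j ∈ N, m i j * S j ≤ ∑ i ∈ N, ∑ j, m i j * S j := by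
      apply Finset.sum_le_sum
      intro i _
      apply Finset.sum_le_sum_of_subset_of_nonneg (Finset.subset_univ N)
      intro j _ hj
      have h0 : 0 ≤ S j := le_of_not_gt (fun h => hj ((hmemN j).mpr h))
      exact mul_nonneg (hm i j) h0
    have hswap : ∑ i ∈ N, ∑ j ∈ N, m j i * S i = ∑ i ∈ N, ∑ j ∈ N, m i j * S j := by
      rw [Finset.sum_comm]
    linarith
  intro i
  have h := hS i
  have hsum : 0 ≤ ∑ j, m i j * S j :=
    Finset.sum_nonneg (fun j _ => mul_nonneg (hm i j) (hnn j))
  have hc : 0 ≤ ∑ j, m j i := Finset.sum_nonneg (fun j _ => hm j i)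
  nlinarith [hΛ i, hμ i, hnn i]

/-- **Existence and uniqueness of the disease-free equilibrium.**
The matrix `ψ^S` is invertible, `S⁰ = (ψ^S)⁻¹ Π` is entrywise positive, the point
`P⁰ = (S⁰, 0, 0, 0)` is an equilibrium of the SEIR metapopulation model with
infection during travel, and it is the only equilibrium with all `E_i = I_i = 0`;
in particular the only solution of `ψ^S S = Π`, `ψ^R R = 0` is `S = S⁰`, `R = 0`. -/
theorem disease_free_equilibrium_exists_unique
    (n : ℕ) [NeZero n]
    (Λ β μ γ σ δ α ξ p : Fin n → ℝ) (m : Fin n → Fin n → ℝ)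
    (hΛ : ∀ i, 0 < Λ i) (hβ : ∀ i, 0 ≤ β i) (hμ : ∀ i, 0 < μ i)
    (hγ : ∀ i, 0 ≤ γ i) (hσ : ∀ i, 0 ≤ σ i) (hδ : ∀ i, 0 ≤ δ i)
    (hα : ∀ i, α i ∈ Set.Icc (0 : ℝ) 1) (hξ : ∀ i, ξ i ∈ Set.Icc (0 : ℝ) 1)
    (hp : ∀ i, p i ∈ Set.Icc (0 : ℝ) 1)
    (hm : ∀ i j, 0 ≤ m i j) (hmd : ∀ i, m i i = 0) :
    -- ψ^S is invertible
    IsUnit (psiS n μ m) ∧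
    -- S⁰ = (ψ^S)⁻¹ Π has strictly positive entries
    (∀ i, 0 < ((psiS n μ m)⁻¹ *ᵥ Λ) i) ∧
    -- P⁰ = (S⁰, 0, 0, 0) is an equilibrium of the system
    (∀ i, vfS n Λ β μ γ σ δ α ξ p m ((psiS n μ m)⁻¹ *ᵥ Λ) 0 0 0 i = 0 ∧
          vfE n Λ β μ γ σ δ α ξ p m ((psiS n μ m)⁻¹ *ᵥ Λ) 0 0 0 i = 0 ∧
          vfI n Λ β μ γ σ δ α ξ p m ((psiS n μ m)⁻¹ *ᵥ Λ) 0 0 0 i = 0 ∧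
          vfR n Λ β μ γ σ δ α ξ p m ((psiS n μ m)⁻¹ *ᵥ Λ) 0 0 0 i = 0) ∧
    -- P⁰ is the unique equilibrium with all E_i = I_i = 0
    (∀ S R : Fin n → ℝ,
      ((∀ i, vfS n Λ β μ γ σ δ α ξ p m S 0 0 R i = 0) ∧
       (∀ i, vfE n Λ β μ γ σ δ α ξ p m S 0 0 R i = 0) ∧
       (∀ i, vfI n Λ β μ γ σ δ α ξ p m S 0 0 R i = 0) ∧
       (∀ i, vfR n Λ β μ γ σ δ α ξ p m S 0 0 R i = 0)) →
      S = (psiS n μ m)⁻¹ *ᵥ Λ ∧ R = 0) ∧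
    -- in particular, the only solution of ψ^S S = Π and ψ^R R = 0 is S = S⁰, R = 0
    (∀ S R : Fin n → ℝ, psiS n μ m *ᵥ S = Λ → psiS n μ m *ᵥ R = 0 →
      S = (psiS n μ m)⁻¹ *ᵥ Λ ∧ R = 0) := by
  classical
  have hdet := psiS_det_ne n μ m hμ hm hmd
  have hU : IsUnit (psiS n μ m) := by
    rw [Matrix.isUnit_iff_isUnit_det]
    exact isUnit_iff_ne_zero.mpr hdet
  have hinvmul : (psiS n μ m)⁻¹ * psiS n μ m = 1 := Matrix.nonsing_inv_mul _ (isUnit_iff_ne_zero.mpr hdet)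
  have hmulinv : psiS n μ m * (psiS n μ m)⁻¹ = 1 := Matrix.mul_nonsing_inv _ (isUnit_iff_ne_zero.mpr hdet)
  set S0 := (psiS n μ m)⁻¹ *ᵥ Λ with hS0
  have hS0eq : psiS n μ m *ᵥ S0 = Λ := by
    rw [hS0, Matrix.mulVec_mulVec, hmulinv, Matrix.one_mulVec]
  have hS0entry : ∀ i, (μ i + ∑ j, m j i) * S0 i - ∑ j, m i j * S0 j = Λ i := by
    intro i; rw [← psiS_mulVec, hS0eq]
  have hS0pos := psiS_pos_sol n Λ μ m hΛ hμ hm S0 hS0entry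
  have huniq : ∀ S : Fin n → ℝ, psiS n μ m *ᵥ S = Λ → S = S0 := by
    intro S hSe
    rw [hS0, ← hSe, Matrix.mulVec_mulVec, hinvmul, Matrix.one_mulVec]
  have hker : ∀ R : Fin n → ℝ, psiS n μ m *ᵥ R = 0 → R = 0 := by
    intro R hR
    have h := congrArg (fun v => (psiS n μ m)⁻¹ *ᵥ v) hR
    simp only [Matrix.mulVec_mulVec, hinvmul, Matrix.one_mulVec, Matrix.mulVec_zero] at h
    exact h
  have hvfS : ∀ (S R : Fin n → ℝ) (i : Fin n), vfS n Λ β μ γ σ δ α ξ p m S 0 0 R i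
      = Λ i - ((μ i + ∑ j, m j i) * S i - ∑ j, m i j * S j) := by
    intro S R i
    simp only [vfS, Pi.zero_apply, mul_zero, zero_div, sub_zero, zero_mul, mul_one, sub_self]
    ring
  have hvfE0 : ∀ (S R : Fin n → ℝ) (i : Fin n), vfE n Λ β μ γ σ δ α ξ p m S 0 0 R i = 0 := by
    intro S R i
    simp [vfE]
  have hvfI0 : ∀ (S R : Fin n → ℝ) (i : Fin n), vfI n Λ β μ γ σ δ α ξ p m S 0 0 R i = 0 := by
    intro S R i
    simp [vfI]
  have hvfR : ∀ (S R : Fin n → ℝ) (i : Fin n), vfR n Λ β μ γ σ δ α ξ p m S 0 0 R i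
      = -((μ i + ∑ j, m j i) * R i - ∑ j, m i j * R j) := by
    intro S R i
    simp only [vfR, Pi.zero_apply, mul_zero, zero_mul, Finset.sum_const_zero, add_zero]
    ring
  refine ⟨hU, hS0pos, ?_, ?_, ?_⟩
  · intro i
    refine ⟨?_, hvfE0 _ _ i, hvfI0 _ _ i, ?_⟩
    · rw [hvfS, hS0entry i]; ring
    · rw [hvfR]; simp
  · rintro S R ⟨h1, _, _, h4⟩
    have hSeq : psiS n μ m *ᵥ S = Λ := by
      funext i
      have hh := h1 i
      rw [hvfS] at hh
      rw [psiS_mulVec]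
      linarith
    have hReq : psiS n μ m *ᵥ R = 0 := by
      funext i
      have hh := h4 i
      rw [hvfR] at hh
      rw [psiS_mulVec]
      simp only [Pi.zero_apply]
      linarith
    exact ⟨huniq S hSeq, hker R hReq⟩
  · intro S R h1 h2
    exact ⟨huniq S h1, hker R h2⟩
end

section
/- Suppose exposed and infectious individuals do not travel and the patch-level rates are homogeneous: let c = γ + μ > 0 and d = σ + μ + δ > 0, let F₁₁ = diag(β_1, …, β_n) with β_i ≥ 0, V₂₁ = diag(γ_1, …, γ_n) with γ_i ≥ 0, V₁₁ = c·I_n, and let V₂₂ be an n × n matrix with nonpositive off-diagonal entries which is invertible with entrywise nonnegative inverse and all of whose column sums equal d. Then the basic reproduction number R₀ = ρ(F₁₁ V₂₂^{-1} V₂₁ V₁₁^{-1}) satisfies min_{1≤i≤n} (β_i γ_i)/(c·d) ≤ R₀ ≤ max_{1≤i≤n} (β_i γ_i)/(c·d); equivalently min_i R₀^{(i)} ≤ R₀ ≤ max_i R₀^{(i)} with R₀^{(i)} = β_i γ_i / ((γ+μ)(σ+μ+δ)). -/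
open Finset Matrix
open scoped ENNReal NNReal

section Aux

lemma myRadius_eq_biSup_diff {A : Type*} [Ring A] [Algebra ℂ A] (a : A) :
    spectralRadius ℂ a = ⨆ k ∈ spectrum ℂ a \ {0}, (‖k‖₊ : ℝ≥0∞) := by
  unfold spectralRadius
  apply le_antisymm
  · refine iSup₂_le fun k hk => ?_
    rcases eq_or_ne k 0 with rfl | h
    · simp
    · exact le_iSup₂ (f := fun k (_ : k ∈ spectrum ℂ a \ {0}) => (‖k‖₊ : ℝ≥0∞)) k ⟨hk, h⟩
  · exact iSup₂_le fun k hk =>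
      le_iSup₂ (f := fun k (_ : k ∈ spectrum ℂ a) => (‖k‖₊ : ℝ≥0∞)) k hk.1

lemma myRadius_mul_comm {A : Type*} [Ring A] [Algebra ℂ A] (a b : A) :
    spectralRadius ℂ (a * b) = spectralRadius ℂ (b * a) := by
  rw [myRadius_eq_biSup_diff, myRadius_eq_biSup_diff, spectrum.nonzero_mul_comm]

lemma mySpectrum_transpose {n : ℕ} (M : Matrix (Fin n) (Fin n) ℂ) :
    spectrum ℂ Mᵀ = spectrum ℂ M := by
  ext z
  simp only [spectrum.mem_iff, not_iff_not, Matrix.isUnit_iff_isUnit_det]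
  have h : (algebraMap ℂ (Matrix (Fin n) (Fin n) ℂ) z - Mᵀ) =
      (algebraMap ℂ (Matrix (Fin n) (Fin n) ℂ) z - M)ᵀ := by
    rw [Algebra.algebraMap_eq_smul_one, Matrix.transpose_sub,
      Matrix.transpose_smul, Matrix.transpose_one]
  rw [h, Matrix.det_transpose]

lemma myRadius_transpose {n : ℕ} (M : Matrix (Fin n) (Fin n) ℂ) :
    spectralRadius ℂ Mᵀ = spectralRadius ℂ M := by
  unfold spectralRadius
  rw [mySpectrum_transpose]

lemma myPow_nonneg_rowsum {n : ℕ} (D : Matrix (Fin n) (Fin n) ℝ) (hD : ∀ i j, 0 ≤ D i j)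
    {m : ℝ} (hm : 0 ≤ m) (h : ∀ i, m ≤ ∑ j, D i j) (k : ℕ) :
    (∀ i j, 0 ≤ (D ^ k) i j) ∧ ∀ i, m ^ k ≤ ∑ j, (D ^ k) i j := by
  induction k with
  | zero =>
    refine ⟨fun i j => ?_, fun i => ?_⟩
    · rw [pow_zero]
      by_cases hij : i = j <;> simp [Matrix.one_apply, hij]
    · rw [pow_zero]
      simp [Matrix.one_apply]
  | succ k ih =>
    rw [pow_succ]
    refine ⟨fun i j => ?_, fun i => ?_⟩
    · rw [Matrix.mul_apply]
      exact Finset.sum_nonneg fun l _ => mul_nonneg (ih.1 i l) (hD l j)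
    · have hswap : ∑ j, (D ^ k * D) i j = ∑ l, (D ^ k) i l * ∑ j, D l j := by
        simp_rw [Matrix.mul_apply, Finset.mul_sum]
        rw [Finset.sum_comm]
      rw [hswap]
      calc m ^ (k + 1) = m ^ k * m := pow_succ m k
        _ ≤ (∑ l, (D ^ k) i l) * m := mul_le_mul_of_nonneg_right (ih.2 i) hm
        _ = ∑ l, (D ^ k) i l * m := Finset.sum_mul _ _ _
        _ ≤ ∑ l, (D ^ k) i l * ∑ j, D l j :=
            Finset.sum_le_sum fun l _ => mul_le_mul_of_nonneg_left (h l) (ih.1 i l)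

end Aux


/-- **Bounds on `R₀` in the homogeneous case.**
With `F₁₁ = diag(β_i)`, `V₂₁ = diag(γ_i)`, `V₁₁ = c·I` (`c = γ+μ > 0`) and `V₂₂` a
Z-matrix that is invertible with entrywise nonnegative inverse and all column sums
equal to `d = σ+μ+δ > 0`, the basic reproduction number
`R₀ = ρ(F₁₁ V₂₂⁻¹ V₂₁ V₁₁⁻¹)` satisfies
`min_i β_i γ_i/(c d) ≤ R₀ ≤ max_i β_i γ_i/(c d)`. -/
theorem R0_bounds_homogeneous_case
    (n : ℕ) [NeZero n]
    (β γ : Fin n → ℝ) (hβ : ∀ i, 0 ≤ β i) (hγ : ∀ i, 0 ≤ γ i)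
    (c d : ℝ) (hc : 0 < c) (hd : 0 < d)
    (V22 : Matrix (Fin n) (Fin n) ℝ)
    (hZ : ∀ i j, i ≠ j → V22 i j ≤ 0)
    (hV22 : IsUnit V22)
    (hV22inv : ∀ i j, 0 ≤ V22⁻¹ i j)
    (hcol : ∀ j, ∑ i, V22 i j = d) :
    ENNReal.ofReal (Finset.univ.inf' Finset.univ_nonempty
        (fun i => β i * γ i / (c * d))) ≤
      spectralRadius ℂ
        ((Matrix.diagonal β * V22⁻¹ * Matrix.diagonal γ *
            (c • (1 : Matrix (Fin n) (Fin n) ℝ))⁻¹).map (fun x => (x : ℂ))) ∧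
    spectralRadius ℂ
        ((Matrix.diagonal β * V22⁻¹ * Matrix.diagonal γ *
            (c • (1 : Matrix (Fin n) (Fin n) ℝ))⁻¹).map (fun x => (x : ℂ))) ≤
      ENNReal.ofReal (Finset.univ.sup' Finset.univ_nonempty
        (fun i => β i * γ i / (c * d))) := by
    classical
  set A := V22⁻¹ with hA
  have hdet : IsUnit V22.det := (Matrix.isUnit_iff_isUnit_det V22).mp hV22
  have hVA : V22 * A = 1 := Matrix.mul_nonsing_inv V22 hdet
  -- column sums of A are 1/d
  have hAcol : ∀ j, ∑ i, A i j = 1 / d := by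
    intro j
    have h1 : ∑ i, (V22 * A) i j = 1 := by
      rw [hVA]
      simp [Matrix.one_apply]
    have h2 : ∑ i, (V22 * A) i j = d * ∑ k, A k j := by
      simp_rw [Matrix.mul_apply]
      rw [Finset.sum_comm]
      simp_rw [← Finset.sum_mul, hcol, Finset.mul_sum]
    rw [h2] at h1
    field_simp at h1 ⊢
    linarith
  -- the comparison matrix D
  set D : Matrix (Fin n) (Fin n) ℝ :=
    Matrix.diagonal (fun i => β i * γ i / c) * Aᵀ with hD
  have hDentry : ∀ i j, D i j = β i * γ i / c * A j i := by
    intro i j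
    simp [hD, Matrix.diagonal_mul]
  have hDnn : ∀ i j, 0 ≤ D i j := fun i j => by
    rw [hDentry]
    exact mul_nonneg (div_nonneg (mul_nonneg (hβ i) (hγ i)) hc.le) (hV22inv j i)
  have hDrow : ∀ i, ∑ j, D i j = β i * γ i / (c * d) := by
    intro i
    simp_rw [hDentry]
    rw [← Finset.mul_sum, hAcol]
    field_simp
  -- min and max
  set m : ℝ := Finset.univ.inf' Finset.univ_nonempty (fun i => β i * γ i / (c * d)) with hm
  set M : ℝ := Finset.univ.sup' Finset.univ_nonempty (fun i => β i * γ i / (c * d)) with hM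
  have hterm : ∀ i, 0 ≤ β i * γ i / (c * d) := fun i =>
    div_nonneg (mul_nonneg (hβ i) (hγ i)) (mul_nonneg hc.le hd.le)
  have hm0 : 0 ≤ m := by
    rw [hm]
    exact Finset.le_inf' _ (fun i => β i * γ i / (c * d)) fun i _ => hterm i
  have hmle : ∀ i, m ≤ β i * γ i / (c * d) := by
    intro i
    rw [hm]
    exact Finset.inf'_le (fun i => β i * γ i / (c * d)) (Finset.mem_univ i)
  have hMge : ∀ i, β i * γ i / (c * d) ≤ M := by
    intro i
    rw [hM]
    exact Finset.le_sup' (fun i => β i * γ i / (c * d)) (Finset.mem_univ i)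
  have hM0 : 0 ≤ M := (hterm ⟨0, Nat.pos_of_ne_zero (NeZero.ne n)⟩).trans (hMge _)
  -- complexification
  set φ : Matrix (Fin n) (Fin n) ℝ →+* Matrix (Fin n) (Fin n) ℂ :=
    (algebraMap ℝ ℂ).mapMatrix with hφ
  have hmap : ∀ X : Matrix (Fin n) (Fin n) ℝ, X.map (fun x => (x : ℂ)) = φ X := by
    intro X
    ext i j
    simp [hφ, RingHom.mapMatrix_apply]
  have hφapp : ∀ (X : Matrix (Fin n) (Fin n) ℝ) i j, φ X i j = ((X i j : ℝ) : ℂ) := by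
    intro X i j
    simp [hφ, RingHom.mapMatrix_apply]
  -- (c • 1)⁻¹ = c⁻¹ • 1
  have hsmul : (c • (1 : Matrix (Fin n) (Fin n) ℝ))⁻¹ = c⁻¹ • 1 := by
    letI : Invertible c := invertibleOfNonzero hc.ne'
    rw [Matrix.inv_smul (1 : Matrix (Fin n) (Fin n) ℝ) c (by simp), inv_one, invOf_eq_inv]
  -- transpose identity
  have htrans : (A * Matrix.diagonal γ * (c⁻¹ • (1 : Matrix (Fin n) (Fin n) ℝ)) *
      Matrix.diagonal β)ᵀ = D := by
    ext i j
    simp only [hD, Matrix.transpose_apply, Matrix.mul_smul, Matrix.mul_one,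
      Matrix.smul_mul, Matrix.smul_apply, Matrix.mul_diagonal, Matrix.diagonal_mul,
      smul_eq_mul]
    ring
  -- spectral radius equality
  set E : Matrix (Fin n) (Fin n) ℝ :=
    Matrix.diagonal β * A * Matrix.diagonal γ * (c • (1 : Matrix (Fin n) (Fin n) ℝ))⁻¹ with hE
  have hρ : spectralRadius ℂ (φ E) = spectralRadius ℂ (φ D) := by
    have e1 : E = Matrix.diagonal β *
        (A * Matrix.diagonal γ * (c⁻¹ • (1 : Matrix (Fin n) (Fin n) ℝ))) := by
      rw [hE, hsmul]
      noncomm_ring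
    calc spectralRadius ℂ (φ E)
        = spectralRadius ℂ (φ (Matrix.diagonal β) *
            φ (A * Matrix.diagonal γ * (c⁻¹ • 1))) := by rw [e1, _root_.map_mul]
      _ = spectralRadius ℂ (φ (A * Matrix.diagonal γ * (c⁻¹ • 1)) *
            φ (Matrix.diagonal β)) := myRadius_mul_comm _ _
      _ = spectralRadius ℂ (φ (A * Matrix.diagonal γ * (c⁻¹ • 1) * Matrix.diagonal β)) := by
            rw [← _root_.map_mul]
      _ = spectralRadius ℂ ((φ (A * Matrix.diagonal γ * (c⁻¹ • 1) * Matrix.diagonal β))ᵀ) :=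
            (myRadius_transpose _).symm
      _ = spectralRadius ℂ (φ D) := by
            rw [hφ, RingHom.mapMatrix_apply, ← Matrix.transpose_map, htrans,
              ← RingHom.mapMatrix_apply]
  -- norm instances
  letI : NormedRing (Matrix (Fin n) (Fin n) ℂ) := Matrix.linftyOpNormedRing
  letI : NormedAlgebra ℂ (Matrix (Fin n) (Fin n) ℂ) := Matrix.linftyOpNormedAlgebra
  haveI : CompleteSpace (Matrix (Fin n) (Fin n) ℂ) := FiniteDimensional.complete ℂ _
  -- row sums control the norm
  have hnorm_row : ∀ (X : Matrix (Fin n) (Fin n) ℝ), (∀ i j, 0 ≤ X i j) →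
      ∀ i, ((∑ j, ‖(φ X) i j‖₊ : ℝ≥0) : ℝ) = ∑ j, X i j := by
    intro X hX i
    push_cast
    refine Finset.sum_congr rfl fun j _ => ?_
    rw [hφapp, Complex.norm_real, Real.norm_eq_abs, abs_of_nonneg (hX i j)]
  -- upper bound
  have hub : spectralRadius ℂ (φ D) ≤ ENNReal.ofReal M := by
    refine (spectrum.spectralRadius_le_nnnorm (𝕜 := ℂ) (φ D)).trans ?_
    rw [ENNReal.ofReal_eq_coe_nnreal hM0]
    refine ENNReal.coe_le_coe.mpr ?_
    rw [Matrix.linfty_opNNNorm_def]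
    refine Finset.sup_le fun i _ => ?_
    rw [← NNReal.coe_le_coe]
    calc ((∑ j, ‖(φ D) i j‖₊ : ℝ≥0) : ℝ) = ∑ j, D i j := hnorm_row D hDnn i
      _ = β i * γ i / (c * d) := hDrow i
      _ ≤ M := hMge i
  -- lower bound
  have hlb : ENNReal.ofReal m ≤ spectralRadius ℂ (φ D) := by
    refine ge_of_tendsto
      (spectrum.pow_nnnorm_pow_one_div_tendsto_nhds_spectralRadius (φ D)) ?_
    rw [Filter.eventually_atTop]
    refine ⟨1, fun k hk => ?_⟩
    obtain ⟨hnn, hrow⟩ := myPow_nonneg_rowsum D hDnn hm0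
      (fun i => (hDrow i) ▸ hmle i) k
    have hk0 : (k : ℝ) ≠ 0 := Nat.cast_ne_zero.mpr (by omega)
    have key : ENNReal.ofReal (m ^ k) ≤ ((‖(φ D) ^ k‖₊ : ℝ≥0) : ℝ≥0∞) := by
      rw [← map_pow, ENNReal.ofReal_eq_coe_nnreal (pow_nonneg hm0 k)]
      refine ENNReal.coe_le_coe.mpr ?_
      rw [Matrix.linfty_opNNNorm_def]
      set i0 : Fin n := ⟨0, Nat.pos_of_ne_zero (NeZero.ne n)⟩
      refine le_trans ?_ (Finset.le_sup (Finset.mem_univ i0))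
      rw [← NNReal.coe_le_coe]
      calc ((⟨m ^ k, pow_nonneg hm0 k⟩ : ℝ≥0) : ℝ) = m ^ k := rfl
        _ ≤ ∑ j, (D ^ k) i0 j := hrow i0
        _ = ((∑ j, ‖(φ (D ^ k)) i0 j‖₊ : ℝ≥0) : ℝ) := (hnorm_row _ hnn i0).symm
    calc ENNReal.ofReal m
        = ((ENNReal.ofReal m) ^ k) ^ (1 / (k : ℝ)) := by
          rw [← ENNReal.rpow_natCast _ k, ← ENNReal.rpow_mul,
            mul_one_div, div_self hk0, ENNReal.rpow_one]
      _ ≤ ((‖(φ D) ^ k‖₊ : ℝ≥0∞)) ^ (1 / (k : ℝ)) := by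
          refine ENNReal.rpow_le_rpow ?_ (by positivity)
          rw [← ENNReal.ofReal_pow hm0]
          exact key
  refine ⟨?_, ?_⟩
  · rw [hmap, hρ]
    exact hlb
  · rw [hmap, hρ]
    exact hub
end

section
/- Lyapunov derivative estimate: let F and V be m × m real matrices with V invertible, let R₀ ∈ ℝ and b ∈ ℝ^m satisfy b^T V^{-1} F = R₀ b^T with b entrywise nonnegative, and suppose the row vector b^T V^{-1} is entrywise nonnegative. If x : ℝ → ℝ^m is differentiable and satisfies the componentwise differential inequality x'(t) ≤ (F − V) x(t) for all t, then the function L(t) = b^T V^{-1} x(t) satisfies L'(t) ≤ (R₀ − 1) b^T x(t) for all t. In particular, if R₀ < 1 and x(t) is entrywise nonnegative, then L'(t) ≤ 0. -/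
open Matrix

/-- **Lyapunov derivative estimate.**
Let `b` be an entrywise nonnegative left eigenvector of `V⁻¹F` for the eigenvalue `R₀`
with `bᵀV⁻¹` entrywise nonnegative. If `x` satisfies the componentwise differential
inequality `x' ≤ (F − V) x`, then `L = bᵀV⁻¹x` satisfies `L' ≤ (R₀ − 1) bᵀx`; in
particular `L' ≤ 0` whenever `R₀ < 1` and `x(t)` is entrywise nonnegative. -/
theorem lyapunov_derivative_estimate
    (m : ℕ) [NeZero m]
    (F V : Matrix (Fin m) (Fin m) ℝ) (hV : IsUnit V)
    (R₀ : ℝ) (b : Fin m → ℝ) (hb : ∀ i, 0 ≤ b i)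
    (heig : b ᵥ* (V⁻¹ * F) = R₀ • b)
    (hbV : ∀ i, 0 ≤ (b ᵥ* V⁻¹) i)
    (x x' : ℝ → Fin m → ℝ)
    (hx : ∀ t i, HasDerivAt (fun τ => x τ i) (x' t i) t)
    (hineq : ∀ t i, x' t i ≤ ((F - V) *ᵥ x t) i) :
    ∀ t : ℝ,
      HasDerivAt (fun τ => (b ᵥ* V⁻¹) ⬝ᵥ x τ) ((b ᵥ* V⁻¹) ⬝ᵥ x' t) t ∧
      (b ᵥ* V⁻¹) ⬝ᵥ x' t ≤ (R₀ - 1) * (b ⬝ᵥ x t) ∧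
      (R₀ < 1 → (∀ i, 0 ≤ x t i) → (b ᵥ* V⁻¹) ⬝ᵥ x' t ≤ 0) := by
  intro t
  have key : (b ᵥ* V⁻¹) ⬝ᵥ x' t ≤ (R₀ - 1) * (b ⬝ᵥ x t) := by
    have h1 : (b ᵥ* V⁻¹) ⬝ᵥ x' t ≤ (b ᵥ* V⁻¹) ⬝ᵥ ((F - V) *ᵥ x t) := by
      apply Finset.sum_le_sum
      intro i _
      exact mul_le_mul_of_nonneg_left (hineq t i) (hbV i)
    have h2 : (b ᵥ* V⁻¹) ⬝ᵥ ((F - V) *ᵥ x t) = (R₀ - 1) * (b ⬝ᵥ x t) := by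
      rw [dotProduct_mulVec, vecMul_sub, vecMul_vecMul, vecMul_vecMul, heig,
        Matrix.nonsing_inv_mul V ((Matrix.isUnit_iff_isUnit_det V).mp hV), vecMul_one,
        sub_dotProduct, smul_dotProduct, smul_eq_mul, sub_mul, one_mul]
    linarith
  refine ⟨?_, key, ?_⟩
  · exact HasDerivAt.fun_sum fun i _ => (hx t i).const_mul _
  · intro hR hx0
    have : 0 ≤ b ⬝ᵥ x t :=
      Finset.sum_nonneg fun i _ => mul_nonneg (hb i) (hx0 i)
    nlinarith
end
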